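/- Let 𝒢 be the 3-player game with questions uniform over 𝒮 = {(0,0,0),(1,0,0),(0,1,0),(0,0,1),(1,1,1)} ⊆ {0,1}³. Then 𝒢 is playerwise connected but not connected: for each player j the graph H^j on {0,1} (with an edge between x and x' if there exist questions y to the other two players with both (x;y) and (x';y) in 𝒮) is connected, while the graph H on vertex set 𝒮 with edges between question triples differing in exactly one player's question is disconnected. -/
import Mathlib


/-- The question support 𝒮 = {(0,0,0),(1,0,0),(0,1,0),(0,0,1),(1,1,1)} ⊆ {0,1}³. -/
def S5 : Set (Bool × Bool × Bool) :=
  {(false, false, false), (true, false, false), (false, true, false),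
   (false, false, true), (true, true, true)}

/-- Two question triples differ in exactly one player's question. -/
def diffOne (p q : Bool × Bool × Bool) : Prop :=
  (p.1 ≠ q.1 ∧ p.2.1 = q.2.1 ∧ p.2.2 = q.2.2) ∨
  (p.1 = q.1 ∧ p.2.1 ≠ q.2.1 ∧ p.2.2 = q.2.2) ∨
  (p.1 = q.1 ∧ p.2.1 = q.2.1 ∧ p.2.2 ≠ q.2.2)

/-- The 2-connection graph `H` on the support 𝒮: edges between question triples that
differ in exactly one player's question. -/
def Hgraph : SimpleGraph {p : Bool × Bool × Bool // p ∈ S5} :=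
  SimpleGraph.fromRel fun p q => diffOne p.1 q.1

/-- Player 1's projected graph `H¹`: an edge between `x` and `x'` iff there are questions
`y, z` to the other players with both `(x,y,z)` and `(x',y,z)` in 𝒮. -/
def H1 : SimpleGraph Bool :=
  SimpleGraph.fromRel fun x x' => ∃ y z, (x, y, z) ∈ S5 ∧ (x', y, z) ∈ S5

/-- Player 2's projected graph `H²`. -/
def H2 : SimpleGraph Bool :=
  SimpleGraph.fromRel fun y y' => ∃ x z, (x, y, z) ∈ S5 ∧ (x, y', z) ∈ S5

/-- Player 3's projected graph `H³`. -/
def H3 : SimpleGraph Bool :=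
  SimpleGraph.fromRel fun z z' => ∃ x y, (x, y, z) ∈ S5 ∧ (x, y, z') ∈ S5

/-- the game on 𝒮 is playerwise connected (each projected graph `Hʲ` is
connected) but not connected (the graph `H` on 𝒮 is disconnected). -/

lemma mem000 : ((false,false,false) : Bool×Bool×Bool) ∈ S5 := by left; rfl
lemma mem100 : ((true,false,false) : Bool×Bool×Bool) ∈ S5 := by right; left; rfl
lemma mem010 : ((false,true,false) : Bool×Bool×Bool) ∈ S5 := by right; right; left; rfl
lemma mem001 : ((false,false,true) : Bool×Bool×Bool) ∈ S5 := by right; right; right; left; rfl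
lemma memttt : ((true,true,true) : Bool×Bool×Bool) ∈ S5 := by right; right; right; right; rfl

lemma boolConn (G : SimpleGraph Bool) (h : G.Adj false true) : G.Connected := by
  rw [SimpleGraph.connected_iff]
  refine ⟨fun u v => ?_, ⟨false⟩⟩
  match u, v with
  | false, false => exact SimpleGraph.Reachable.refl _
  | true, true => exact SimpleGraph.Reachable.refl _
  | false, true => exact h.reachable
  | true, false => exact h.symm.reachable

lemma isolated (w : {p : Bool × Bool × Bool // p ∈ S5}) :
    ¬ Hgraph.Adj ⟨(true,true,true), memttt⟩ w := by
  obtain ⟨q, hq⟩ := w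
  rintro ⟨hne, h | h⟩ <;>
  · rcases hq with h' | h' | h' | h' | h' <;> subst h' <;>
      simp [diffOne] at h

theorem stmt_19 : H1.Connected ∧ H2.Connected ∧ H3.Connected ∧ ¬ Hgraph.Connected := by
  refine ⟨boolConn _ ?_, boolConn _ ?_, boolConn _ ?_, ?_⟩
  · exact ⟨by simp, Or.inl ⟨false, false, mem000, mem100⟩⟩
  · exact ⟨by simp, Or.inl ⟨false, false, mem000, mem010⟩⟩
  · exact ⟨by simp, Or.inl ⟨false, false, mem000, mem001⟩⟩
  · intro hc
    have hr := hc ⟨(true,true,true), memttt⟩ ⟨(false,false,false), mem000⟩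
    obtain ⟨w⟩ := hr
    cases w with
    | cons h p => exact isolated _ h
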